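/- Fix t ∈ (0,1) and let μ(x) = e^{−1}·(x+t)·(1 + t/x)^{x/t} for x ∈ (0, 1−t). Then for all x ∈ (0, 1−t), 1/e < (μ(x) − x)/t < 1/2; that is, the identric mean of x and x+t lies strictly between x + t/e and x + t/2. -/

import Mathlib

open Real Set

lemma expw_lt {w : ℝ} (h0 : 0 < w) (h1 : w < 1) :
    Real.exp w < 1 + (Real.exp 1 - 1) * w := by
  have h := strictConvexOn_exp.2 (Set.mem_univ (0:ℝ)) (Set.mem_univ (1:ℝ))
    (by norm_num) (by linarith : (0:ℝ) < 1 - w) h0 (by ring)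
  simp only [smul_eq_mul, mul_zero, mul_one, zero_add, Real.exp_zero] at h
  linarith

lemma hd_log_affine (a u : ℝ) (h : a + u ≠ 0) :
    HasDerivAt (fun u => Real.log (a + u)) (1/(a+u)) u := by
  have h1 : HasDerivAt (fun u : ℝ => a + u) 1 u := (hasDerivAt_id u).const_add a
  simpa [Function.comp_def] using (Real.hasDerivAt_log h).comp u h1

noncomputable def Gfun (u : ℝ) : ℝ :=
  (1+u) * Real.log (1+u) - u * Real.log (Real.exp 1 + u)

lemma Gderiv {u : ℝ} (hu : 0 ≤ u) :
    HasDerivAt Gfun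
      (Real.log (1+u) + 1 - (Real.log (Real.exp 1 + u) + u/(Real.exp 1 + u))) u := by
  have he : 0 < Real.exp 1 := Real.exp_pos 1
  have h1 : (1:ℝ) + u ≠ 0 := by linarith
  have h2 : Real.exp 1 + u ≠ 0 := by linarith
  have d1 : HasDerivAt (fun u : ℝ => (1+u) * Real.log (1+u))
      (1 * Real.log (1+u) + (1+u) * (1/(1+u))) u :=
    ((hasDerivAt_id u).const_add 1).mul (hd_log_affine 1 u h1)
  have d2 : HasDerivAt (fun u : ℝ => u * Real.log (Real.exp 1 + u))
      (1 * Real.log (Real.exp 1 + u) + u * (1/(Real.exp 1 + u))) u :=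
    (hasDerivAt_id u).mul (hd_log_affine (Real.exp 1) u h2)
  have := d1.sub d2
  refine this.congr_deriv ?_
  rw [mul_one_div_cancel h1]; ring

lemma Gderiv_pos {u : ℝ} (hu : 0 < u) :
    0 < Real.log (1+u) + 1 - (Real.log (Real.exp 1 + u) + u/(Real.exp 1 + u)) := by
  have he : 0 < Real.exp 1 := Real.exp_pos 1
  have heu : 0 < Real.exp 1 + u := by linarith
  set w : ℝ := u / (Real.exp 1 + u) with hw
  have hw0 : 0 < w := div_pos hu heu
  have hw1 : w < 1 := (div_lt_one heu).mpr (by linarith)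
  have key := expw_lt hw0 hw1
  -- 1 + (e-1)*w = e*(1+u)/(e+u)
  have heq : 1 + (Real.exp 1 - 1) * w = Real.exp 1 * (1+u) / (Real.exp 1 + u) := by
    rw [hw]; field_simp; ring
  have h1u : (0:ℝ) < 1 + u := by linarith
  have hlt : Real.exp w < Real.exp 1 * (1+u) / (Real.exp 1 + u) := by
    rw [← heq]; exact key
  have := (Real.lt_log_iff_exp_lt (by positivity)).mpr hlt
  have hlog : Real.log (Real.exp 1 * (1+u) / (Real.exp 1 + u))
      = 1 + Real.log (1+u) - Real.log (Real.exp 1 + u) := by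
    rw [Real.log_div (by positivity) (by linarith), Real.log_mul (by positivity) (by linarith),
      Real.log_exp]
  rw [hlog] at this
  linarith

lemma Gpos {u : ℝ} (hu : 0 < u) : 0 < Gfun u := by
  have hc : ContinuousOn Gfun (Set.Ici 0) := by
    apply ContinuousOn.sub
    · exact (continuousOn_const.add continuousOn_id).mul
        ((continuousOn_const.add continuousOn_id).log
          (fun x hx => by simp at hx ⊢; linarith))
    · exact continuousOn_id.mul
        ((continuousOn_const.add continuousOn_id).log
          (fun x hx => by have := Real.exp_pos 1; simp at hx ⊢; nlinarith))
  have hmono : StrictMonoOn Gfun (Set.Ici 0) := by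
    apply strictMonoOn_of_deriv_pos (convex_Ici 0) hc
    intro x hx
    rw [interior_Ici] at hx
    rw [(Gderiv (le_of_lt hx)).deriv]
    exact Gderiv_pos hx
  have h0 : Gfun 0 = 0 := by simp [Gfun]
  have := hmono (Set.self_mem_Ici) (Set.mem_Ici.mpr hu.le) hu
  rwa [h0] at this

noncomputable def Ffun (u : ℝ) : ℝ :=
  u + u * Real.log (1+u/2) - (1+u) * Real.log (1+u)

lemma Fderiv {u : ℝ} (hu : 0 ≤ u) :
    HasDerivAt Ffun
      (1 + (Real.log (1+u/2) + u/(2+u)) - (Real.log (1+u) + 1)) u := by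
  have h1 : (1:ℝ) + u ≠ 0 := by linarith
  have h2 : (1:ℝ) + u/2 ≠ 0 := by linarith
  have dlog2 : HasDerivAt (fun u : ℝ => Real.log (1+u/2)) (1/(2+u)) u := by
    have hin : HasDerivAt (fun u : ℝ => 1 + u/2) (1/2) u := by
      simpa using ((hasDerivAt_id u).div_const 2).const_add 1
    have := (Real.hasDerivAt_log h2).comp u hin
    refine this.congr_deriv ?_
    rw [inv_eq_one_div, div_mul_div_comm, one_mul, show (1+u/2)*2 = 2+u by ring]
  have d1 : HasDerivAt (fun u : ℝ => u * Real.log (1+u/2))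
      (1 * Real.log (1+u/2) + u * (1/(2+u))) u := (hasDerivAt_id u).mul dlog2
  have d2 : HasDerivAt (fun u : ℝ => (1+u) * Real.log (1+u))
      (1 * Real.log (1+u) + (1+u) * (1/(1+u))) u :=
    ((hasDerivAt_id u).const_add 1).mul (hd_log_affine 1 u h1)
  have := ((hasDerivAt_id u).add d1).sub d2
  refine this.congr_deriv ?_
  rw [mul_one_div_cancel h1]; ring

lemma Fderiv_pos {u : ℝ} (hu : 0 < u) :
    0 < 1 + (Real.log (1+u/2) + u/(2+u)) - (Real.log (1+u) + 1) := by
  have h2u : (0:ℝ) < 2 + u := by linarith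
  set w : ℝ := u / (2+u) with hw
  have hw0 : 0 < w := div_pos hu h2u
  have key : 1 + w < Real.exp w := by linarith [Real.add_one_lt_exp (ne_of_gt hw0)]
  have hlt : Real.log (1+w) < w := (Real.log_lt_iff_lt_exp (by linarith)).mpr (by linarith)
  have heq : 1 + w = (1+u) / (1+u/2) := by
    rw [hw]; field_simp; ring
  have hlog : Real.log (1+w) = Real.log (1+u) - Real.log (1+u/2) := by
    rw [heq, Real.log_div (by linarith) (by linarith)]
  rw [hlog] at hlt
  linarith

lemma Fpos {u : ℝ} (hu : 0 < u) : 0 < Ffun u := by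
  have hc : ContinuousOn Ffun (Set.Ici 0) := by
    apply ContinuousOn.sub
    · refine continuousOn_id.add (continuousOn_id.mul
        ((continuousOn_const.add (continuousOn_id.div_const 2)).log
          (fun x hx => by simp at hx ⊢; linarith)))
    · exact (continuousOn_const.add continuousOn_id).mul
        ((continuousOn_const.add continuousOn_id).log
          (fun x hx => by simp at hx ⊢; linarith))
  have hmono : StrictMonoOn Ffun (Set.Ici 0) := by
    apply strictMonoOn_of_deriv_pos (convex_Ici 0) hc
    intro x hx
    rw [interior_Ici] at hx
    rw [(Fderiv (le_of_lt hx)).deriv]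
    exact Fderiv_pos hx
  have h0 : Ffun 0 = 0 := by simp [Ffun]
  have := hmono (Set.self_mem_Ici) (Set.mem_Ici.mpr hu.le) hu
  rwa [h0] at this

lemma rpow_lower {u : ℝ} (hu : 0 < u) :
    Real.exp 1 + u < (1+u) ^ ((1+u)/u) := by
  have h1 : (0:ℝ) < 1+u := by linarith
  have he : (0:ℝ) < Real.exp 1 := Real.exp_pos 1
  have hG := Gpos hu
  rw [Real.rpow_def_of_pos h1]
  have hlog : Real.log (Real.exp 1 + u) < Real.log (1+u) * ((1+u)/u) := by
    rw [show Real.log (1+u) * ((1+u)/u) = (1+u) * Real.log (1+u) / u by ring,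
      lt_div_iff₀ hu]
    unfold Gfun at hG
    nlinarith
  calc Real.exp 1 + u = Real.exp (Real.log (Real.exp 1 + u)) :=
        (Real.exp_log (by linarith)).symm
    _ < _ := Real.exp_lt_exp.mpr hlog

lemma rpow_upper {u : ℝ} (hu : 0 < u) :
    (1+u) ^ ((1+u)/u) < Real.exp 1 * (1 + u/2) := by
  have h1 : (0:ℝ) < 1+u := by linarith
  have he : (0:ℝ) < Real.exp 1 := Real.exp_pos 1
  have hF := Fpos hu
  rw [Real.rpow_def_of_pos h1]
  have hlogr : Real.log (Real.exp 1 * (1 + u/2)) = 1 + Real.log (1+u/2) := by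
    rw [Real.log_mul (ne_of_gt he) (by linarith), Real.log_exp]
  have hlog : Real.log (1+u) * ((1+u)/u) < Real.log (Real.exp 1 * (1 + u/2)) := by
    rw [hlogr]
    rw [show Real.log (1+u) * ((1+u)/u) = (1+u) * Real.log (1+u) / u by ring]
    rw [div_lt_iff₀ hu]
    unfold Ffun at hF
    nlinarith
  calc Real.exp (Real.log (1+u) * ((1+u)/u)) < Real.exp (Real.log (Real.exp 1 * (1+u/2))) :=
        Real.exp_lt_exp.mpr hlog
    _ = _ := Real.exp_log (by positivity)

/-- The identric mean of `x` and `x + t`: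
`μ(x) = e⁻¹ (x+t) (1 + t/x)^(x/t)`. -/
noncomputable def identric (t x : ℝ) : ℝ :=
  (Real.exp 1)⁻¹ * (x + t) * (1 + t / x) ^ (x / t)

/-- Part (iii) of lemma "lollipop": for fixed `t ∈ (0,1)` and `x ∈ (0, 1-t)`,
`1/e < (μ(x) - x)/t < 1/2`, i.e. the identric mean of `x` and `x + t` lies strictly
between `x + t/e` and `x + t/2`. -/
theorem identric_between (t : ℝ) (ht : t ∈ Set.Ioo (0 : ℝ) 1) :
    ∀ x ∈ Set.Ioo (0 : ℝ) (1 - t),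
      1 / Real.exp 1 < (identric t x - x) / t ∧ (identric t x - x) / t < 1 / 2 := by
  obtain ⟨ht0, ht1⟩ := ht
  intro x hx
  obtain ⟨hx0, hx1⟩ := hx
  set u : ℝ := t / x with hudef
  have hu : 0 < u := div_pos ht0 hx0
  have hxu : x * u = t := by rw [hudef]; field_simp
  have h1u : (0:ℝ) < 1 + u := by linarith
  have he : (0:ℝ) < Real.exp 1 := Real.exp_pos 1
  have hinv : (0:ℝ) < (Real.exp 1)⁻¹ := by positivity
  have hei : (Real.exp 1)⁻¹ * Real.exp 1 = 1 := inv_mul_cancel₀ (ne_of_gt he)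
  have hid : identric t x = (Real.exp 1)⁻¹ * (x * ((1+u) ^ ((1+u)/u))) := by
    unfold identric
    rw [show (1+u)/u = 1 + 1/u by field_simp; ring, Real.rpow_add h1u, Real.rpow_one]
    rw [show x / t = 1 / u by rw [hudef]; field_simp]
    have hxt : x + t = x * (1 + u) := by rw [← hxu]; ring
    rw [hxt]; ring
  have hQl := rpow_lower hu
  have hQu := rpow_upper hu
  set Q : ℝ := (1+u) ^ ((1+u)/u) with hQ
  have k1 : (Real.exp 1)⁻¹ * (x * (Real.exp 1 + u)) = x + (Real.exp 1)⁻¹ * t := by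
    rw [← hxu]; field_simp
  have k3 : (Real.exp 1)⁻¹ * (x * (Real.exp 1 * (1 + u/2))) = x + (x*u)/2 := by
    field_simp
  have k2 := mul_lt_mul_of_pos_left (mul_lt_mul_of_pos_left hQl hx0) hinv
  have k4 := mul_lt_mul_of_pos_left (mul_lt_mul_of_pos_left hQu hx0) hinv
  rw [hxu] at k3
  constructor
  · rw [lt_div_iff₀ ht0, hid, one_div]
    linarith
  · rw [div_lt_iff₀ ht0, hid]
    linarith
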